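/- Let 0 < δ ≤ 1 and let Q be a partially ordered set on n points (n ≥ 1) with comp(Q) ≤ δ·n(n−1)/2. Then e(Q) ≥ n!·(2/(δ(n−1)+2))^n, and consequently e(Q) ≥ e^{1−2/δ}·(2/(eδ))^n. -/

import Mathlib

/-- The number of linear extensions of a partial order `P` on `n` points:
bijections to `{1, ..., n}` (modeled as `Fin n` with its usual order) that
are strictly monotone with respect to `P`. -/
noncomputable def linExtCount (n : ℕ) (P : PartialOrder (Fin n)) : ℕ :=
  Nat.card {f : Fin n ≃ Fin n // ∀ x y : Fin n, P.lt x y → f x < f y}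

/-- The number of comparable pairs of `P`: each unordered comparable pair
`{x, y}` corresponds to exactly one ordered pair `(x, y)` with `x ≺ y`. -/
noncomputable def compCount (n : ℕ) (P : PartialOrder (Fin n)) : ℕ :=
  Nat.card {p : Fin n × Fin n // P.lt p.1 p.2}
open Finset
section Listings
open scoped Classical
variable {n : ℕ}

def IsListing (P : PartialOrder (Fin n)) (S : Finset (Fin n)) (l : List (Fin n)) : Prop :=
  l.Nodup ∧ l.toFinset = S ∧ l.Pairwise (fun a b => ¬ P.lt b a)

noncomputable def extN (P : PartialOrder (Fin n)) (S : Finset (Fin n)) : ℕ :=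
  Nat.card {l : List (Fin n) // IsListing P S l}

noncomputable def upC (P : PartialOrder (Fin n)) (S : Finset (Fin n)) (x : Fin n) : ℕ :=
  (S.filter (fun y => P.lt x y)).card

noncomputable def minSet (P : PartialOrder (Fin n)) (S : Finset (Fin n)) : Finset (Fin n) :=
  S.filter (fun x => ∀ y ∈ S, ¬ P.lt y x)

instance listingFinite (P : PartialOrder (Fin n)) (S : Finset (Fin n)) :
    Finite {l : List (Fin n) // IsListing P S l} := by
  have : Function.Injective
      (fun l : {l : List (Fin n) // IsListing P S l} => (fun i : Fin n => l.val[(i : ℕ)]?)) := by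
    rintro ⟨l₁, h₁⟩ ⟨l₂, h₂⟩ h
    have hl₁ : l₁.length ≤ n := by simpa using h₁.1.length_le_card
    have hl₂ : l₂.length ≤ n := by simpa using h₂.1.length_le_card
    ext1
    apply List.ext_getElem?
    intro i
    by_cases hi : i < n
    · exact congrFun h ⟨i, hi⟩
    · rw [List.getElem?_eq_none (le_trans hl₁ (not_lt.1 hi)),
        List.getElem?_eq_none (le_trans hl₂ (not_lt.1 hi))]
  exact Finite.of_injective _ this

lemma minSet_subset (P : PartialOrder (Fin n)) (S : Finset (Fin n)) : minSet P S ⊆ S :=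
  filter_subset _ _

lemma exists_min (P : PartialOrder (Fin n)) (S : Finset (Fin n)) {y : Fin n} (hy : y ∈ S) :
    ∃ x ∈ minSet P S, P.le x y := by
  obtain ⟨m, hm, hmin⟩ : ∃ m ∈ S.filter (fun z => P.le z y),
      ∀ z ∈ S.filter (fun z => P.le z y), ¬ P.lt z m := by
    obtain ⟨m, hm⟩ := @Finset.exists_minimal (Fin n) P.toLE ⟨fun a b c h1 h2 => P.le_trans c b a h2 h1⟩
      (S.filter (fun z => P.le z y)) ⟨y, by simp [hy, P.le_refl]⟩
    exact ⟨m, hm.1, fun z hz hlt => @lt_irrefl _ P.toPreorder z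
      (@lt_of_lt_of_le _ P.toPreorder _ _ _ hlt (hm.2 hz (@le_of_lt _ P.toPreorder _ _ hlt)))⟩
  simp only [mem_filter] at hm
  refine ⟨m, ?_, hm.2⟩
  simp only [minSet, mem_filter]
  refine ⟨hm.1, fun z hz hlt => hmin z ?_ hlt⟩
  simp only [mem_filter]
  exact ⟨hz, P.le_trans _ _ _ (@le_of_lt _ P.toPreorder _ _ hlt) hm.2⟩

lemma isListing_cons (P : PartialOrder (Fin n)) {S : Finset (Fin n)} {x : Fin n}
    (hx : x ∈ minSet P S) {l : List (Fin n)} (hl : IsListing P (S.erase x) l) :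
    IsListing P S (x :: l) := by
  obtain ⟨hnd, htf, hpw⟩ := hl
  simp only [minSet, mem_filter] at hx
  have hmem : ∀ b ∈ l, b ∈ S.erase x := by intro b hb; rw [← htf]; simpa using hb
  refine ⟨?_, ?_, ?_⟩
  · refine List.nodup_cons.2 ⟨fun h => ?_, hnd⟩
    exact (Finset.notMem_erase x S) (hmem x h)
  · rw [List.toFinset_cons, htf, Finset.insert_erase hx.1]
  · refine List.pairwise_cons.2 ⟨fun b hb => ?_, hpw⟩
    exact hx.2 b (Finset.mem_of_mem_erase (hmem b hb))

lemma step (P : PartialOrder (Fin n)) (S : Finset (Fin n)) :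
    ∑ x ∈ minSet P S, extN P (S.erase x) ≤ extN P S := by
  classical
  letI : ∀ x : Fin n, Fintype {l : List (Fin n) // IsListing P (S.erase x) l} :=
    fun x => Fintype.ofFinite _
  letI := Fintype.ofFinite {l : List (Fin n) // IsListing P S l}
  have hinj : Function.Injective
      (fun p : (Σ x : {x // x ∈ minSet P S}, {l : List (Fin n) // IsListing P (S.erase x.1) l}) =>
        (⟨p.1.1 :: p.2.1, isListing_cons P p.1.2 p.2.2⟩ : {l : List (Fin n) // IsListing P S l})) := by
    rintro ⟨⟨x₁, hx₁⟩, ⟨l₁, hl₁⟩⟩ ⟨⟨x₂, hx₂⟩, ⟨l₂, hl₂⟩⟩ h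
    simp only [Subtype.mk.injEq, List.cons.injEq] at h
    obtain ⟨h1, h2⟩ := h
    subst h1
    simp [h2]
  have hle := Nat.card_le_card_of_injective _ hinj
  have hsig : Nat.card (Σ x : {x // x ∈ minSet P S}, {l : List (Fin n) // IsListing P (S.erase x.1) l})
      = ∑ x : {x // x ∈ minSet P S}, Nat.card {l : List (Fin n) // IsListing P (S.erase x.1) l} := by
    rw [Nat.card_eq_fintype_card, Fintype.card_sigma]
    simp [Nat.card_eq_fintype_card]
  rw [hsig] at hle
  unfold extN
  rw [← Finset.sum_coe_sort (minSet P S)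
    (fun x => Nat.card {l : List (Fin n) // IsListing P (S.erase x) l})]
  exact hle

lemma upC_mono (P : PartialOrder (Fin n)) {S T : Finset (Fin n)} (hST : S ⊆ T) (y : Fin n) :
    upC P S y ≤ upC P T y :=
  Finset.card_le_card (Finset.filter_subset_filter _ hST)

lemma covering (P : PartialOrder (Fin n)) (S : Finset (Fin n)) :
    S.card ≤ ∑ x ∈ minSet P S, (1 + upC P S x) := by
  classical
  have hsub : S ⊆ (minSet P S).biUnion (fun x => insert x (S.filter (fun y => P.lt x y))) := by
    intro y hy
    obtain ⟨x, hx, hle⟩ := exists_min P S hy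
    rw [Finset.mem_biUnion]
    refine ⟨x, hx, ?_⟩
    rcases eq_or_ne x y with rfl | hne
    · exact Finset.mem_insert_self _ _
    · exact Finset.mem_insert_of_mem (by simp [hy, @lt_of_le_of_ne _ P _ _ hle hne])
  calc S.card ≤ ((minSet P S).biUnion (fun x => insert x (S.filter (fun y => P.lt x y)))).card :=
        Finset.card_le_card hsub
    _ ≤ ∑ x ∈ minSet P S, (insert x (S.filter (fun y => P.lt x y))).card :=
        Finset.card_biUnion_le
    _ ≤ ∑ x ∈ minSet P S, (1 + upC P S x) := by
        refine Finset.sum_le_sum fun x _ => ?_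
        rw [add_comm]
        exact Finset.card_insert_le _ _

lemma main_induction (P : PartialOrder (Fin n)) (S : Finset (Fin n)) :
    S.card.factorial ≤ extN P S * ∏ y ∈ S, (1 + upC P S y) := by
  classical
  suffices H : ∀ k (S : Finset (Fin n)), S.card = k →
      k.factorial ≤ extN P S * ∏ y ∈ S, (1 + upC P S y) by
    simpa using H S.card S rfl
  intro k
  induction k using Nat.strong_induction_on with
  | _ k ih =>
    intro S hk
    rcases Nat.eq_zero_or_pos k with rfl | hkpos
    · rw [Finset.card_eq_zero] at hk
      subst hk
      have hne : Nonempty {l : List (Fin n) // IsListing P (∅ : Finset (Fin n)) l} :=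
        ⟨⟨[], by simp [IsListing]⟩⟩
      have : 1 ≤ extN P ∅ := Nat.one_le_iff_ne_zero.2 (Nat.card_ne_zero.2 ⟨hne, inferInstance⟩)
      simpa [Nat.factorial] using this
    · have hcard : ∀ x ∈ minSet P S, (S.erase x).card = k - 1 := fun x hx => by
        rw [Finset.card_erase_of_mem (minSet_subset P S hx), hk]
      have hih : ∀ x ∈ minSet P S,
          (k - 1).factorial ≤ extN P (S.erase x) * ∏ y ∈ S.erase x, (1 + upC P S y) := by
        intro x hx
        calc (k - 1).factorial
            ≤ extN P (S.erase x) * ∏ y ∈ S.erase x, (1 + upC P (S.erase x) y) :=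
              ih (k - 1) (Nat.sub_lt hkpos one_pos) _ (hcard x hx)
          _ ≤ extN P (S.erase x) * ∏ y ∈ S.erase x, (1 + upC P S y) := by
              refine Nat.mul_le_mul_left _ (Finset.prod_le_prod' fun y _ => ?_)
              exact Nat.add_le_add_left (upC_mono P (Finset.erase_subset _ _) y) 1
      calc k.factorial = k * (k - 1).factorial := by
            rw [← Nat.succ_pred_eq_of_pos hkpos, Nat.factorial_succ]
            simp [Nat.pred_eq_sub_one, Nat.succ_pred_eq_of_pos hkpos]
        _ ≤ (∑ x ∈ minSet P S, (1 + upC P S x)) * (k - 1).factorial := by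
            refine Nat.mul_le_mul_right _ ?_
            rw [← hk]; exact covering P S
        _ = ∑ x ∈ minSet P S, (1 + upC P S x) * (k - 1).factorial := by
            rw [Finset.sum_mul]
        _ ≤ ∑ x ∈ minSet P S, (1 + upC P S x) *
              (extN P (S.erase x) * ∏ y ∈ S.erase x, (1 + upC P S y)) := by
            refine Finset.sum_le_sum fun x hx => Nat.mul_le_mul_left _ (hih x hx)
        _ = ∑ x ∈ minSet P S, extN P (S.erase x) * ∏ y ∈ S, (1 + upC P S y) := by
            refine Finset.sum_congr rfl fun x hx => ?_
            rw [← Finset.mul_prod_erase S _ (minSet_subset P S hx)]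
            ring
        _ = (∑ x ∈ minSet P S, extN P (S.erase x)) * ∏ y ∈ S, (1 + upC P S y) := by
            rw [Finset.sum_mul]
        _ ≤ extN P S * ∏ y ∈ S, (1 + upC P S y) :=
            Nat.mul_le_mul_right _ (step P S)

lemma isListing_ofFn (P : PartialOrder (Fin n))
    (f : {f : Fin n ≃ Fin n // ∀ x y : Fin n, P.lt x y → f x < f y}) :
    IsListing P Finset.univ (List.ofFn f.val.symm) := by
  refine ⟨List.nodup_ofFn.2 f.val.symm.injective, ?_, List.pairwise_ofFn.2 ?_⟩
  · ext x
    simp only [List.mem_toFinset, List.mem_ofFn, Finset.mem_univ, iff_true]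
    exact ⟨f.val x, by simp⟩
  · intro i j hij hlt
    have := f.prop _ _ hlt
    simp only [Equiv.apply_symm_apply] at this
    exact absurd hij (by omega)

lemma bridge1 (P : PartialOrder (Fin n)) : linExtCount n P = extN P Finset.univ := by
  refine Nat.card_eq_of_bijective
    (fun f => ⟨List.ofFn f.val.symm, isListing_ofFn P f⟩) ⟨?_, ?_⟩
  · intro f₁ f₂ h
    have h' : List.ofFn f₁.val.symm = List.ofFn f₂.val.symm := congrArg Subtype.val h
    have hfun := List.ofFn_injective h'
    have hsymm : f₁.val.symm = f₂.val.symm := Equiv.coe_fn_injective hfun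
    have : f₁.val = f₂.val := by
      have := congrArg Equiv.symm hsymm
      simpa using this
    exact Subtype.ext this
  · intro l
    obtain ⟨l, hnd, htf, hpw⟩ := l
    have hlen : l.length = n := by
      have := List.toFinset_card_of_nodup hnd
      rw [htf] at this
      simpa using this.symm
    set g : Fin n → Fin n := fun i => l.get (Fin.cast hlen.symm i) with hg
    have hginj : Function.Injective g := by
      intro i j h
      have := (List.Nodup.getElem_inj_iff hnd).1 h
      exact Fin.ext (by simpa using this)
    obtain ⟨e, he⟩ : ∃ e : Fin n ≃ Fin n, ∀ i, e i = g i :=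
      ⟨Equiv.ofBijective g (Finite.injective_iff_bijective.1 hginj), fun i => rfl⟩
    have hprop : ∀ x y : Fin n, P.lt x y → e.symm x < e.symm y := by
      intro x y hlt
      rcases lt_trichotomy (e.symm x) (e.symm y) with h | h | h
      · exact h
      · exfalso
        have : x = y := by
          have := congrArg e h
          simpa using this
        subst this
        exact @lt_irrefl _ P.toPreorder _ hlt
      · exfalso
        have hp := (List.pairwise_iff_get.1 hpw) (Fin.cast hlen.symm (e.symm y))
          (Fin.cast hlen.symm (e.symm x)) (by simpa using h)
        have hx : g (e.symm x) = x := by rw [← he, Equiv.apply_symm_apply]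
        have hy : g (e.symm y) = y := by rw [← he, Equiv.apply_symm_apply]
        rw [hg] at hx hy
        simp only at hx hy
        exact hp (by rw [hx, hy]; exact hlt)
    refine ⟨⟨e.symm, hprop⟩, ?_⟩
    simp only [Subtype.mk.injEq, Equiv.symm_symm]
    refine Subtype.ext ?_
    apply List.ext_getElem
    · simp [hlen]
    · intro i h1 h2
      simp only [List.getElem_ofFn]
      rw [he]
      simp [hg]

lemma bridge2 (P : PartialOrder (Fin n)) : compCount n P = ∑ x : Fin n, upC P Finset.univ x := by
  classical
  rw [compCount, Nat.card_eq_fintype_card, Fintype.card_subtype]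
  rw [Finset.card_filter, Fintype.sum_prod_type]
  refine Finset.sum_congr rfl fun x _ => ?_
  rw [upC, Finset.card_filter]

lemma amgm {m : ℕ} (hm : 0 < m) (f : Fin m → ℝ) (hf : ∀ i, 0 ≤ f i) :
    ∏ i, f i ≤ ((∑ i, f i) / m) ^ m := by
  have hm' : (0:ℝ) < m := by exact_mod_cast hm
  have key := Real.geom_mean_le_arith_mean_weighted Finset.univ (fun _ => 1 / m) f
    (fun i _ => by positivity) (by simp; field_simp) (fun i _ => hf i)
  have hL : ∀ i, (f i ^ (1 / (m:ℝ))) ^ m = f i := by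
    intro i
    rw [← Real.rpow_natCast (f i ^ (1 / (m:ℝ))) m, ← Real.rpow_mul (hf i)]
    field_simp
    simp
  calc ∏ i, f i = ∏ i, (f i ^ (1 / (m:ℝ))) ^ m := by
        refine Finset.prod_congr rfl fun i _ => (hL i).symm
    _ = (∏ i, f i ^ (1 / (m:ℝ))) ^ m := by rw [Finset.prod_pow]
    _ ≤ (∑ i, (1 / (m:ℝ)) * f i) ^ m := by
        refine pow_le_pow_left₀ (Finset.prod_nonneg fun i _ => ?_) key m
        exact Real.rpow_nonneg (hf i) _
    _ = ((∑ i, f i) / m) ^ m := by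
        rw [← Finset.mul_sum]
        ring_nf

lemma pow_self_le_factorial_mul_exp (m : ℕ) :
    (m : ℝ) ^ m ≤ (m.factorial : ℝ) * Real.exp 1 ^ m := by
  have h := Real.pow_div_factorial_le_exp (x := (m:ℝ)) (by positivity) m
  have hfac : (0:ℝ) < m.factorial := by exact_mod_cast m.factorial_pos
  rw [div_le_iff₀ hfac] at h
  calc (m:ℝ) ^ m ≤ Real.exp m * m.factorial := h
    _ = (m.factorial : ℝ) * Real.exp 1 ^ m := by
        rw [← Real.exp_nat_mul]
        ring_nf
theorem linExtCount_ge_of_sparse_strong (n : ℕ) (hn : 1 ≤ n) (δ : ℝ)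
    (hδ0 : 0 < δ) (hδ1 : δ ≤ 1) (P : PartialOrder (Fin n))
    (hcomp : (compCount n P : ℝ) ≤ δ * ((n : ℝ) * ((n : ℝ) - 1) / 2)) :
    (Nat.factorial n : ℝ) * (2 / (δ * ((n : ℝ) - 1) + 2)) ^ n ≤ (linExtCount n P : ℝ) ∧
    Real.exp (1 - 2 / δ) * (2 / (Real.exp 1 * δ)) ^ n ≤ (linExtCount n P : ℝ) := by
  classical
  have hn0 : (0:ℝ) < n := by exact_mod_cast hn
  have hn1 : (1:ℝ) ≤ n := by exact_mod_cast hn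
  set D : ℝ := δ * ((n : ℝ) - 1) + 2 with hDdef
  have hD0 : (0:ℝ) < D := by
    have : 0 ≤ δ * ((n:ℝ) - 1) := mul_nonneg hδ0.le (by linarith)
    linarith
  -- the combinatorial bound
  have hnat := main_induction P (Finset.univ : Finset (Fin n))
  rw [Finset.card_univ, Fintype.card_fin, ← bridge1] at hnat
  have hcast : (n.factorial : ℝ) ≤ (linExtCount n P : ℝ) *
      ∏ y : Fin n, (1 + (upC P Finset.univ y : ℝ)) := by
    have := (Nat.cast_le (α := ℝ)).2 hnat
    push_cast at this
    convert this using 2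
  -- AM-GM
  have hsum : ∑ y : Fin n, (1 + (upC P Finset.univ y : ℝ)) = n + (compCount n P : ℝ) := by
    rw [Finset.sum_add_distrib]
    simp only [Finset.sum_const, Finset.card_univ, Fintype.card_fin, nsmul_eq_mul, mul_one]
    rw [bridge2]
    push_cast
    ring
  have hprod : ∏ y : Fin n, (1 + (upC P Finset.univ y : ℝ)) ≤ (D / 2) ^ n := by
    calc ∏ y : Fin n, (1 + (upC P Finset.univ y : ℝ))
        ≤ ((∑ y : Fin n, (1 + (upC P Finset.univ y : ℝ))) / n) ^ n :=
          amgm hn _ (fun y => by positivity)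
      _ ≤ (D / 2) ^ n := by
          refine pow_le_pow_left₀ (by positivity) ?_ n
          rw [hsum, div_le_iff₀ hn0]
          have : (D / 2) * n = n + δ * ((n:ℝ) * ((n:ℝ) - 1) / 2) := by
            rw [hDdef]; ring
          rw [this]
          linarith
  have hE0 : (0:ℝ) ≤ (linExtCount n P : ℝ) := by positivity
  have h1 : (n.factorial : ℝ) ≤ (linExtCount n P : ℝ) * (D / 2) ^ n :=
    le_trans hcast (mul_le_mul_of_nonneg_left hprod hE0)
  have hfirst : (n.factorial : ℝ) * (2 / D) ^ n ≤ (linExtCount n P : ℝ) := by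
    have h2 := mul_le_mul_of_nonneg_right h1 (pow_nonneg (by positivity : (0:ℝ) ≤ 2 / D) n)
    calc (n.factorial : ℝ) * (2 / D) ^ n
        ≤ (linExtCount n P : ℝ) * (D / 2) ^ n * (2 / D) ^ n := h2
      _ = (linExtCount n P : ℝ) * ((D / 2) * (2 / D)) ^ n := by rw [mul_pow, mul_assoc]
      _ = (linExtCount n P : ℝ) := by
          rw [div_mul_div_comm, mul_comm D 2, div_self (by positivity), one_pow, mul_one]
  refine ⟨hfirst, le_trans ?_ hfirst⟩
  -- second inequality
  have hnδ : (0:ℝ) < (n:ℝ) * δ := by positivity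
  have hkey : Real.exp (1 - 2 / δ) * D ^ n ≤ ((n:ℝ) * δ) ^ n := by
    have h2 : D / ((n:ℝ) * δ) = (2 - δ) / (δ * n) + 1 := by
      field_simp
      ring
    have h3 : (D / ((n:ℝ) * δ)) ^ n ≤ Real.exp (2 / δ - 1) := by
      calc (D / ((n:ℝ) * δ)) ^ n ≤ (Real.exp ((2 - δ) / (δ * (n:ℝ)))) ^ n := by
            refine pow_le_pow_left₀ (by positivity) ?_ n
            rw [h2]
            exact Real.add_one_le_exp _
        _ = Real.exp ((2 - δ) / (δ * (n:ℝ)) * n) := by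
            rw [← Real.exp_nat_mul]; ring_nf
        _ = Real.exp (2 / δ - 1) := by
            congr 1
            field_simp
    calc Real.exp (1 - 2 / δ) * D ^ n
        = Real.exp (1 - 2 / δ) * ((D / ((n:ℝ) * δ)) ^ n * ((n:ℝ) * δ) ^ n) := by
          rw [← mul_pow, div_mul_cancel₀ _ hnδ.ne']
      _ ≤ Real.exp (1 - 2 / δ) * (Real.exp (2 / δ - 1) * ((n:ℝ) * δ) ^ n) := by
          refine mul_le_mul_of_nonneg_left ?_ (Real.exp_nonneg _)
          exact mul_le_mul_of_nonneg_right h3 (by positivity)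
      _ = ((n:ℝ) * δ) ^ n := by
          rw [← mul_assoc, ← Real.exp_add]
          have hz : 1 - 2 / δ + (2 / δ - 1) = 0 := by ring
          rw [hz, Real.exp_zero, one_mul]
  -- combine with n^n ≤ n! e^n
  have hfac := pow_self_le_factorial_mul_exp n
  have he : (0:ℝ) < Real.exp 1 := Real.exp_pos 1
  rw [div_pow, div_pow]
  rw [mul_div_assoc', mul_div_assoc', div_le_div_iff₀ (by positivity) (by positivity)]
  calc Real.exp (1 - 2 / δ) * 2 ^ n * D ^ n
      = 2 ^ n * (Real.exp (1 - 2 / δ) * D ^ n) := by ring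
    _ ≤ 2 ^ n * ((n:ℝ) * δ) ^ n := mul_le_mul_of_nonneg_left hkey (by positivity)
    _ = 2 ^ n * ((n:ℝ) ^ n * δ ^ n) := by rw [mul_pow]
    _ ≤ 2 ^ n * (((n.factorial : ℝ) * Real.exp 1 ^ n) * δ ^ n) := by
        refine mul_le_mul_of_nonneg_left (mul_le_mul_of_nonneg_right hfac (by positivity))
          (by positivity)
    _ = (n.factorial : ℝ) * 2 ^ n * (Real.exp 1 * δ) ^ n := by
        rw [mul_pow]; ring
end Listings
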